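/- arXiv:2504.14721 — 2 statements merged into one kernel-verified Lean document; each statement's English description precedes it below -/
import Mathlib

section
/- Let A ∈ ℝ^{n×n×s} be a third-order tensor whose block circulant matrix ξ(A) has spectral radius strictly less than 1, and let B ∈ ℝ^{n×m×s}. Then the series W_c = Σ_{k=0}^{∞} A^k ⊛ B ⊛ B^T ⊛ (A^T)^k converges and is the unique solution of the T-Lyapunov equation W_c − A⊛W_c⊛A^T = B⊛B^T. -/
open scoped Matrix
/-- A third-order tensor of size `n × m × s` is represented by its `s` frontal slices. -/
abbrev Tensor3 (n m s : ℕ) := ZMod s → Matrix (Fin n) (Fin m) ℝ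

/-- The block circulant operator `ξ`: the `(i, j)` block is the frontal slice `A_{i - j mod s}`. -/
def bcirc {n m s : ℕ} (A : Tensor3 n m s) :
    Matrix (ZMod s × Fin n) (ZMod s × Fin m) ℝ :=
  fun p q => A (p.1 - q.1) p.2 q.2

/-- The T-product `A ⊛ B = μ⁻¹(ξ(A) · μ(B))`, whose `k`-th frontal slice is the circular
convolution `∑ⱼ A_{k-j} · B_j` of the frontal slices. -/
def tProd {n m h s : ℕ} [NeZero s] (A : Tensor3 n m s) (B : Tensor3 m h s) :
    Tensor3 n h s :=
  fun k => ∑ j : ZMod s, A (k - j) * B j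


/-- The T-transpose: each frontal slice is transposed and the order of slices 2,…,s reversed. -/
def tTrans {n m s : ℕ} (A : Tensor3 n m s) : Tensor3 m n s :=
  fun k => (A (-k))ᵀ

/-- The T-identity tensor: first frontal slice the identity matrix, the others zero. -/
def tId (n s : ℕ) : Tensor3 n n s :=
  fun k => if k = 0 then 1 else 0

/-- `k`-fold T-product power of a tensor, `A^0 = I`. -/
def tPow {n s : ℕ} [NeZero s] (A : Tensor3 n n s) : ℕ → Tensor3 n n s
  | 0 => tId n s
  | k + 1 => tProd A (tPow A k)

set_option linter.unusedSectionVars false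
section Alg
variable {n m h s : ℕ} [NeZero s]

lemma bcirc_injective : Function.Injective (bcirc (n := n) (m := m) (s := s)) := by
  intro X Y hXY
  funext k i j
  have := congrFun (congrFun hXY (k, i)) (0, j)
  simpa [bcirc] using this

lemma bcirc_tProd (A : Tensor3 n m s) (B : Tensor3 m h s) :
    bcirc (tProd A B) = bcirc A * bcirc B := by
  funext p q
  simp only [bcirc, tProd, Matrix.sum_apply, Matrix.mul_apply, Fintype.sum_prod_type]
  refine Fintype.sum_equiv (Equiv.addRight q.1) _ _ fun j => ?_
  refine Finset.sum_congr rfl fun i _ => ?_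
  simp only [Equiv.coe_addRight, add_sub_cancel_right, sub_add_eq_sub_sub]
  rw [sub_right_comm]

lemma bcirc_tTrans (A : Tensor3 n m s) : bcirc (tTrans A) = (bcirc A)ᵀ := by
  funext p q
  simp [bcirc, tTrans, neg_sub]

lemma bcirc_tId : bcirc (tId n s) = (1 : Matrix (ZMod s × Fin n) (ZMod s × Fin n) ℝ) := by
  funext p q
  simp only [bcirc, tId]
  by_cases h1 : p.1 = q.1 <;> by_cases h2 : p.2 = q.2 <;>
    simp [h1, h2, Matrix.one_apply, sub_eq_zero, Prod.ext_iff]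

lemma bcirc_tPow (A : Tensor3 n n s) (k : ℕ) : bcirc (tPow A k) = bcirc A ^ k := by
  induction k with
  | zero => simp [tPow, bcirc_tId]
  | succ k ih => rw [tPow, bcirc_tProd, ih, pow_succ']

lemma bcirc_sub (X Y : Tensor3 n m s) : bcirc (X - Y) = bcirc X - bcirc Y := by
  funext p q
  simp [bcirc, Matrix.sub_apply]

lemma hasSum_tensor_iff {f : ℕ → Tensor3 n m s} {W : Tensor3 n m s} :
    HasSum f W ↔ ∀ c i j, HasSum (fun k => f k c i j) (W c i j) := by
  rw [Pi.hasSum]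
  refine forall_congr' fun c => ?_
  refine Pi.hasSum.trans ?_
  exact forall_congr' fun i => Pi.hasSum

lemma hasSum_tProd_left {f : ℕ → Tensor3 m h s} {W : Tensor3 m h s} (C : Tensor3 n m s)
    (hf : HasSum f W) : HasSum (fun k => tProd C (f k)) (tProd C W) := by
  rw [hasSum_tensor_iff] at hf ⊢
  intro c i j
  simp only [tProd, Matrix.sum_apply, Matrix.mul_apply]
  exact hasSum_sum fun d _ => hasSum_sum fun a _ => ((hf d a j).mul_left _)

lemma hasSum_tProd_right {f : ℕ → Tensor3 n m s} {W : Tensor3 n m s} (C : Tensor3 m h s)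
    (hf : HasSum f W) : HasSum (fun k => tProd (f k) C) (tProd W C) := by
  rw [hasSum_tensor_iff] at hf ⊢
  intro c i j
  simp only [tProd, Matrix.sum_apply, Matrix.mul_apply]
  exact hasSum_sum fun d _ => hasSum_sum fun a _ => ((hf (c - d) i a).mul_right _)

end Alg

section Analytic

open Filter
open scoped ENNReal NNReal

attribute [local instance] Matrix.linftyOpNormedRing Matrix.linftyOpNormedAlgebra

lemma geom_bound_of_spectralRadius_lt_one {A : Type*} [NormedRing A] [NormedAlgebra ℂ A]
    [CompleteSpace A] (a : A) (ha : spectralRadius ℂ a < 1) :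
    ∃ r C : ℝ, 0 ≤ r ∧ r < 1 ∧ 1 ≤ C ∧ ∀ k, ‖a ^ k‖ ≤ C * r ^ k := by
  obtain ⟨r, hr1, hr2⟩ := ENNReal.lt_iff_exists_nnreal_btwn.mp ha
  have hrlt1 : (r : ℝ) < 1 := by exact_mod_cast ENNReal.coe_lt_one_iff.mp hr2
  have hr0 : (0 : ℝ) ≤ r := r.coe_nonneg
  have hgel := spectrum.pow_nnnorm_pow_one_div_tendsto_nhds_spectralRadius a
  have hev : ∀ᶠ k : ℕ in atTop, (‖a ^ k‖₊ : ℝ≥0∞) ^ (1 / (k : ℝ)) < (r : ℝ≥0∞) :=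
    hgel.eventually_lt_const hr1
  obtain ⟨N, hN⟩ := hev.exists_forall_of_atTop
  have key : ∀ k, N + 1 ≤ k → ‖a ^ k‖ ≤ (r : ℝ) ^ k := by
    intro k hk
    have hk0 : (k : ℝ) ≠ 0 := Nat.cast_ne_zero.mpr (by omega)
    have h1 := hN k (le_trans (Nat.le_succ N) hk)
    have h2 : ((‖a ^ k‖₊ : ℝ≥0∞) ^ (1 / (k : ℝ))) ^ (k : ℝ) ≤ ((r : ℝ≥0∞)) ^ (k : ℝ) :=
      ENNReal.rpow_le_rpow h1.le (by positivity)
    rw [← ENNReal.rpow_mul, one_div, inv_mul_cancel₀ hk0, ENNReal.rpow_one] at h2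
    rw [ENNReal.rpow_natCast, ← ENNReal.coe_pow, ENNReal.coe_le_coe] at h2
    calc ‖a ^ k‖ = ((‖a ^ k‖₊ : ℝ≥0) : ℝ) := rfl
    _ ≤ ((r ^ k : ℝ≥0) : ℝ) := by exact_mod_cast h2
    _ = (r : ℝ) ^ k := by push_cast; ring
  have hrpos : (0 : ℝ) < r := by
    have h0 : (0 : ℝ≥0∞) < r := lt_of_le_of_lt zero_le hr1
    exact_mod_cast h0
  set C : ℝ := 1 + ∑ k ∈ Finset.range (N + 1), ‖a ^ k‖ / (r : ℝ) ^ k with hC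
  have hC1 : 1 ≤ C := by
    have : 0 ≤ ∑ k ∈ Finset.range (N + 1), ‖a ^ k‖ / (r : ℝ) ^ k :=
      Finset.sum_nonneg fun k _ => by positivity
    simp [hC]; linarith
  refine ⟨r, C, hr0, hrlt1, hC1, fun k => ?_⟩
  rcases lt_or_ge k (N + 1) with hk | hk
  · have hterm : ‖a ^ k‖ / (r : ℝ) ^ k ≤ C := by
      have hmem : k ∈ Finset.range (N + 1) := Finset.mem_range.mpr hk
      have := Finset.single_le_sum (f := fun k => ‖a ^ k‖ / (r : ℝ) ^ k)
        (fun k _ => by positivity) hmem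
      simp only [hC]; linarith
    have hrk : (0 : ℝ) < (r : ℝ) ^ k := by positivity
    calc ‖a ^ k‖ = (‖a ^ k‖ / (r : ℝ) ^ k) * (r : ℝ) ^ k := by field_simp
    _ ≤ C * (r : ℝ) ^ k := by exact mul_le_mul_of_nonneg_right hterm hrk.le
  · calc ‖a ^ k‖ ≤ (r : ℝ) ^ k := key k hk
    _ ≤ C * (r : ℝ) ^ k := by nlinarith [pow_nonneg hr0 k]

end Analytic

section Analytic2

open Filter
open scoped ENNReal NNReal

attribute [local instance] Matrix.linftyOpNormedRing Matrix.linftyOpNormedAlgebra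

variable {N : Type*} [Fintype N] [DecidableEq N]

lemma spectrum_transpose (M : Matrix N N ℂ) : spectrum ℂ Mᵀ = spectrum ℂ M := by
  ext x
  have h1 : algebraMap ℂ (Matrix N N ℂ) x - Mᵀ = (algebraMap ℂ (Matrix N N ℂ) x - M)ᵀ := by
    rw [Matrix.transpose_sub, Matrix.algebraMap_eq_diagonal, Matrix.diagonal_transpose]
  rw [spectrum.mem_iff, spectrum.mem_iff, h1, Matrix.isUnit_iff_isUnit_det,
    Matrix.det_transpose, ← Matrix.isUnit_iff_isUnit_det]

lemma spectralRadius_transpose (M : Matrix N N ℂ) :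
    spectralRadius ℂ Mᵀ = spectralRadius ℂ M := by
  simp only [spectralRadius, spectrum_transpose]

end Analytic2

section CM

variable {n m s : ℕ}

/-- complexification of a real matrix -/
def cM {α β : Type*} (X : Matrix α β ℝ) : Matrix α β ℂ := X.map fun x => (x : ℂ)

lemma cM_injective {α β : Type*} : Function.Injective (cM (α := α) (β := β)) := by
  intro X Y hXY
  funext i j
  have := congrFun (congrFun hXY i) j
  simpa [cM, Matrix.map_apply, Complex.ofReal_inj] using this

lemma cM_mul {α β γ : Type*} [Fintype β] (X : Matrix α β ℝ) (Y : Matrix β γ ℝ) :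
    cM (X * Y) = cM X * cM Y := by
  funext i j
  simp [cM, Matrix.map_apply, Matrix.mul_apply]

lemma cM_transpose {α β : Type*} (X : Matrix α β ℝ) : cM Xᵀ = (cM X)ᵀ := by
  funext i j; rfl

lemma cM_sub {α β : Type*} (X Y : Matrix α β ℝ) : cM (X - Y) = cM X - cM Y := by
  funext i j
  simp [cM, Matrix.map_apply, Matrix.sub_apply]

lemma cM_pow {α : Type*} [Fintype α] [DecidableEq α] (X : Matrix α α ℝ) (k : ℕ) :
    cM (X ^ k) = cM X ^ k := by
  induction k with
  | zero => funext i j; simp [cM, Matrix.map_apply, Matrix.one_apply, apply_ite]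
  | succ k ih => rw [pow_succ, pow_succ, cM_mul, ih]

end CM

section Core

open Filter
open scoped ENNReal NNReal

attribute [local instance] Matrix.linftyOpNormedRing Matrix.linftyOpNormedAlgebra

variable {n m s : ℕ} [NeZero s]

example : CompleteSpace (Matrix (ZMod s × Fin n) (ZMod s × Fin n) ℂ) := by infer_instance

lemma core_hasSum (A : Tensor3 n n s) (B : Tensor3 n m s)
    (hA : spectralRadius ℂ ((bcirc A).map (fun x => (x : ℂ))) < 1) :
    ∃ W : Tensor3 n n s, ∀ c i j,
      HasSum (fun k => (tProd (tProd (tProd (tPow A k) B) (tTrans B)) (tPow (tTrans A) k)) c i j)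
        (W c i j) := by
  set M := cM (bcirc A) with hM
  have hA' : spectralRadius ℂ M < 1 := hA
  have hAT : spectralRadius ℂ Mᵀ < 1 := by rw [spectralRadius_transpose]; exact hA'
  obtain ⟨r1, C1, hr10, hr11, hC1, hb1⟩ := geom_bound_of_spectralRadius_lt_one M hA'
  obtain ⟨r2, C2, hr20, hr21, hC2, hb2⟩ := geom_bound_of_spectralRadius_lt_one Mᵀ hAT
  have hC1' : (0:ℝ) ≤ C1 := le_trans zero_le_one hC1
  have hC2' : (0:ℝ) ≤ C2 := le_trans zero_le_one hC2
  set Cm := cM (bcirc (tProd B (tTrans B))) with hCm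
  set g : ℕ → Matrix (ZMod s × Fin n) (ZMod s × Fin n) ℂ := fun k => M ^ k * Cm * Mᵀ ^ k with hg
  have hsum : Summable g := by
    apply Summable.of_norm_bounded (g := fun k => (C1 * ‖Cm‖ * C2) * (r1 * r2) ^ k)
    · exact (summable_geometric_of_lt_one (by positivity) (by nlinarith)).mul_left _
    · intro k
      calc ‖g k‖ ≤ ‖M ^ k * Cm‖ * ‖Mᵀ ^ k‖ := norm_mul_le _ _
      _ ≤ (‖M ^ k‖ * ‖Cm‖) * ‖Mᵀ ^ k‖ :=
          mul_le_mul_of_nonneg_right (norm_mul_le _ _) (norm_nonneg _)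
      _ ≤ (C1 * r1 ^ k * ‖Cm‖) * (C2 * r2 ^ k) := by
          refine mul_le_mul (mul_le_mul_of_nonneg_right (hb1 k) (norm_nonneg _)) (hb2 k)
            (norm_nonneg _) ?_
          exact mul_nonneg (mul_nonneg hC1' (pow_nonneg hr10 k)) (norm_nonneg _)
      _ = (C1 * ‖Cm‖ * C2) * (r1 * r2) ^ k := by rw [mul_pow]; ring
  have hgsum := hsum.hasSum
  set W0 := ∑' k, g k with hW0
  refine ⟨fun c i j => (W0 ((c, i)) ((0, j))).re, ?_⟩
  intro c i j
  let e : Matrix (ZMod s × Fin n) (ZMod s × Fin n) ℂ →ₗ[ℂ] ℂ :=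
    { toFun := fun X => X (c, i) (0, j), map_add' := fun _ _ => rfl,
      map_smul' := fun _ _ => rfl }
  have he : Continuous e := e.continuous_of_finiteDimensional
  have h1 : HasSum (fun k => g k (c, i) (0, j)) (W0 (c, i) (0, j)) :=
    hgsum.map e.toAddMonoidHom he
  have h2 := h1.map (AddMonoidHom.mk' Complex.re fun _ _ => Complex.add_re _ _)
    Complex.continuous_re
  have hTk : ∀ k, cM (bcirc (tProd (tProd (tProd (tPow A k) B) (tTrans B))
      (tPow (tTrans A) k))) = g k := by
    intro k
    simp only [bcirc_tProd, bcirc_tTrans, bcirc_tPow, cM_mul, cM_transpose, cM_pow, hg, hCm, hM]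
    simp only [Matrix.mul_assoc]
  have hfun : (fun k => Complex.re (g k (c, i) (0, j))) =
      fun k => (tProd (tProd (tProd (tPow A k) B) (tTrans B)) (tPow (tTrans A) k)) c i j := by
    funext k
    rw [← hTk k]
    simp [cM, bcirc, Matrix.map_apply, sub_zero]
  have h3 : HasSum (fun k => (g k (c, i) (0, j)).re) ((W0 (c, i) (0, j)).re) := h2
  rw [hfun] at h3
  exact h3

lemma core_zero (A : Tensor3 n n s)
    (hA : spectralRadius ℂ ((bcirc A).map (fun x => (x : ℂ))) < 1) (D : Tensor3 n n s)
    (hD : bcirc D = bcirc A * bcirc D * (bcirc A)ᵀ) : D = 0 := by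
  set M := cM (bcirc A) with hM
  have hA' : spectralRadius ℂ M < 1 := hA
  have hAT : spectralRadius ℂ Mᵀ < 1 := by rw [spectralRadius_transpose]; exact hA'
  obtain ⟨r1, C1, hr10, hr11, hC1, hb1⟩ := geom_bound_of_spectralRadius_lt_one M hA'
  obtain ⟨r2, C2, hr20, hr21, hC2, hb2⟩ := geom_bound_of_spectralRadius_lt_one Mᵀ hAT
  have hC1' : (0:ℝ) ≤ C1 := le_trans zero_le_one hC1
  have hC2' : (0:ℝ) ≤ C2 := le_trans zero_le_one hC2
  set X := cM (bcirc D) with hX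
  have hX1 : X = M * X * Mᵀ := by
    rw [hX, hM, ← cM_transpose, ← cM_mul, ← cM_mul]
    exact congrArg cM hD
  have hk : ∀ k : ℕ, X = M ^ k * X * Mᵀ ^ k := by
    intro k
    induction k with
    | zero => simp
    | succ k ih =>
      calc X = M * X * Mᵀ := hX1
      _ = M * (M ^ k * X * Mᵀ ^ k) * Mᵀ := by rw [← ih]
      _ = M ^ (k + 1) * X * Mᵀ ^ (k + 1) := by
          rw [pow_succ', pow_succ]
          simp only [mul_assoc]
  have hnorm : ∀ k : ℕ, ‖X‖ ≤ (C1 * ‖X‖ * C2) * (r1 * r2) ^ k := by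
    intro k
    calc ‖X‖ = ‖M ^ k * X * Mᵀ ^ k‖ := by rw [← hk k]
    _ ≤ ‖M ^ k * X‖ * ‖Mᵀ ^ k‖ := norm_mul_le _ _
    _ ≤ (‖M ^ k‖ * ‖X‖) * ‖Mᵀ ^ k‖ :=
        mul_le_mul_of_nonneg_right (norm_mul_le _ _) (norm_nonneg _)
    _ ≤ (C1 * r1 ^ k * ‖X‖) * (C2 * r2 ^ k) := by
        refine mul_le_mul (mul_le_mul_of_nonneg_right (hb1 k) (norm_nonneg _)) (hb2 k)
          (norm_nonneg _) ?_
        exact mul_nonneg (mul_nonneg hC1' (pow_nonneg hr10 k)) (norm_nonneg _)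
    _ = (C1 * ‖X‖ * C2) * (r1 * r2) ^ k := by rw [mul_pow]; ring
  have hlim : Tendsto (fun k : ℕ => (C1 * ‖X‖ * C2) * (r1 * r2) ^ k) atTop (nhds 0) := by
    have h := tendsto_pow_atTop_nhds_zero_of_lt_one (by positivity : (0:ℝ) ≤ r1 * r2)
      (by nlinarith : r1 * r2 < 1)
    simpa using h.const_mul (C1 * ‖X‖ * C2)
  have hle : ‖X‖ ≤ 0 := ge_of_tendsto' hlim hnorm
  have hX0 : X = 0 := norm_le_zero_iff.mp hle
  have hbD : bcirc D = 0 := by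
    apply cM_injective
    rw [← hX, hX0]
    funext i j
    simp [cM, Matrix.map_apply]
  apply bcirc_injective (m := n)
  rw [hbD]
  funext p q
  simp [bcirc]

end Core

/-- If `ξ(A)` has spectral radius `< 1`, the series `∑ₖ Aᵏ ⊛ B ⊛ Bᵀ ⊛ (Aᵀ)ᵏ` converges and its
sum is the unique solution of the T-Lyapunov equation `W - A ⊛ W ⊛ Aᵀ = B ⊛ Bᵀ`. -/
theorem tLyapunov_hasSum_unique {n m s : ℕ} [NeZero s]
    (A : Tensor3 n n s) (B : Tensor3 n m s)
    (hA : spectralRadius ℂ ((bcirc A).map (fun x => (x : ℂ))) < 1) :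
    ∃ W : Tensor3 n n s,
      HasSum (fun k : ℕ => tProd (tProd (tProd (tPow A k) B) (tTrans B)) (tPow (tTrans A) k)) W ∧
      W - tProd (tProd A W) (tTrans A) = tProd B (tTrans B) ∧
      ∀ W' : Tensor3 n n s,
        W' - tProd (tProd A W') (tTrans A) = tProd B (tTrans B) → W' = W := by
  obtain ⟨W, hW⟩ := core_hasSum A B hA
  set T : ℕ → Tensor3 n n s :=
    fun k => tProd (tProd (tProd (tPow A k) B) (tTrans B)) (tPow (tTrans A) k) with hT
  have hWsum : HasSum T W := hasSum_tensor_iff.mpr hW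
  have hstep : ∀ k, tProd (tProd A (T k)) (tTrans A) = T (k + 1) := by
    intro k
    apply bcirc_injective
    simp only [hT, bcirc_tProd, bcirc_tTrans, bcirc_tPow]
    rw [pow_succ', pow_succ]
    simp only [Matrix.mul_assoc]
  have hT0 : T 0 = tProd B (tTrans B) := by
    apply bcirc_injective
    simp only [hT, bcirc_tProd, bcirc_tTrans, bcirc_tPow, tPow, bcirc_tId, pow_zero,
      Matrix.one_mul, Matrix.mul_one]
  have hΦ : HasSum (fun k => T (k + 1)) (tProd (tProd A W) (tTrans A)) := by
    have h1 := hasSum_tProd_right (tTrans A) (hasSum_tProd_left A hWsum)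
    simpa only [hstep] using h1
  have heq : W - tProd (tProd A W) (tTrans A) = tProd B (tTrans B) := by
    have h2' : HasSum T (tProd (tProd A W) (tTrans A) + ∑ i ∈ Finset.range 1, T i) :=
      (hasSum_nat_add_iff 1).mp hΦ
    have h2 := hWsum.unique h2'
    rw [Finset.sum_range_one, hT0] at h2
    exact sub_eq_of_eq_add' h2
  refine ⟨W, hWsum, heq, ?_⟩
  intro W' hW'
  have e1 := congrArg bcirc hW'
  have e2 := congrArg bcirc heq
  rw [bcirc_sub, bcirc_tProd, bcirc_tProd, bcirc_tTrans] at e1 e2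
  have h3 := e1.trans e2.symm
  have hD : bcirc (W' - W) = bcirc A * bcirc (W' - W) * (bcirc A)ᵀ := by
    rw [bcirc_sub, Matrix.mul_sub, Matrix.sub_mul]
    exact sub_eq_sub_iff_sub_eq_sub.mp h3
  have h5 : W' - W = 0 := core_zero A hA _ hD
  exact sub_eq_zero.mp h5
end

section
/- Solving the T-Lyapunov equation decouples in the Fourier domain: W_c solves W_c − A⊛W_c⊛A^T = B⊛B^T if and only if for each k = 1,...,s the Fourier-domain diagonal block Ŵ_k of ξ(W_c) solves the matrix Lyapunov equation Ŵ_k − Â_k Ŵ_k Â_k^* = B̂_k B̂_k^*, where Â_k and B̂_k are the corresponding Fourier-domain diagonal blocks of ξ(A) and ξ(B). -/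
open scoped Matrix
/-- `ω = exp(-2πi/s)`, the primitive `s`-th root of unity used in the DFT. -/
noncomputable def tOmega (s : ℕ) : ℂ := Complex.exp (-2 * Real.pi * Complex.I / s)

/-- The `k`-th Fourier-domain diagonal block of the block circulant matrix of a tensor:
`Â_k = ∑ⱼ ω^{k·j} A_j`. -/
noncomputable def fhat {n m s : ℕ} [NeZero s] (A : Tensor3 n m s) (k : ZMod s) :
    Matrix (Fin n) (Fin m) ℂ :=
  ∑ j : ZMod s, (tOmega s) ^ (k.val * j.val) • (A j).map (fun x => (x : ℂ))

section Aux
set_option linter.unusedSectionVars false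
variable {s : ℕ} [NeZero s]

lemma tOmega_pow_s : tOmega s ^ s = 1 := by
  have hs : (s : ℂ) ≠ 0 := Nat.cast_ne_zero.mpr (NeZero.ne s)
  rw [tOmega, ← Complex.exp_nat_mul]
  rw [show (s : ℂ) * (-2 * Real.pi * Complex.I / s) = (-1 : ℤ) * (2 * Real.pi * Complex.I) by
    field_simp; ring]
  exact Complex.exp_int_mul_two_pi_mul_I (-1)

lemma tOmega_pow_mod (a : ℕ) : tOmega s ^ (a % s) = tOmega s ^ a := by
  conv_rhs => rw [← Nat.div_add_mod a s]
  rw [pow_add, pow_mul, tOmega_pow_s, one_pow, one_mul]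

/-- The character `ψ x = ω^x` on `ZMod s`. -/
noncomputable def psi (x : ZMod s) : ℂ := tOmega s ^ x.val

lemma psi_zero : psi (0 : ZMod s) = 1 := by simp [psi, ZMod.val_zero]

lemma psi_add (x y : ZMod s) : psi (x + y) = psi x * psi y := by
  rw [psi, ZMod.val_add, tOmega_pow_mod, pow_add]; rfl

lemma tOmega_abs : ‖tOmega s‖ = 1 := by
  rw [tOmega, show (-2 * Real.pi * Complex.I / s) = ((-2 * Real.pi / s : ℝ) : ℂ) * Complex.I by
    push_cast; ring]
  exact Complex.norm_exp_ofReal_mul_I _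

lemma psi_mul_psi_neg (x : ZMod s) : psi x * psi (-x) = 1 := by
  rw [← psi_add, add_neg_cancel, psi_zero]


lemma conj_psi (x : ZMod s) : (starRingEnd ℂ) (psi x) = psi (-x) := by
  have habs : ‖psi x‖ = 1 := by
    rw [psi, norm_pow, tOmega_abs, one_pow]
  have h1 : psi x * (starRingEnd ℂ) (psi x) = 1 := by
    rw [Complex.mul_conj, Complex.normSq_eq_norm_sq, habs]; norm_num
  calc (starRingEnd ℂ) (psi x) = (psi x * psi (-x)) * (starRingEnd ℂ) (psi x) := by
        rw [psi_mul_psi_neg, one_mul]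
    _ = psi (-x) * (psi x * (starRingEnd ℂ) (psi x)) := by ring
    _ = psi (-x) := by rw [h1, mul_one]

lemma psi_hmul (k j : ZMod s) : tOmega s ^ (k.val * j.val) = psi (k * j) := by
  rw [psi, ZMod.val_mul, tOmega_pow_mod]

lemma psi_ne_one_of_prim {d : ZMod s} (hd : d ≠ 0) : psi d ≠ 1 := by
  have hprim : IsPrimitiveRoot (tOmega s) s := by
    have := (Complex.isPrimitiveRoot_exp s (NeZero.ne s)).inv
    convert this using 2
    · rfl
    rw [tOmega, ← Complex.exp_neg]
    congr 1; ring
  have hlt : d.val < s := ZMod.val_lt d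
  have hpos : 0 < d.val := Nat.pos_of_ne_zero (fun h0 => hd ((ZMod.val_eq_zero d).mp h0))
  exact hprim.pow_ne_one_of_pos_of_lt hpos.ne' hlt

lemma psi_pow_s (d : ZMod s) : psi d ^ s = 1 := by
  rw [psi, ← pow_mul, mul_comm, pow_mul, tOmega_pow_s, one_pow]

lemma sum_psi (d : ZMod s) : ∑ k : ZMod s, psi (k * d) = if d = 0 then (s : ℂ) else 0 := by
  split_ifs with hd
  · subst hd; simp [psi_zero]
  · have h1 : ∀ k : ZMod s, psi (k * d) = (psi d) ^ k.val := by
      intro k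
      rw [psi, psi, ← pow_mul, ZMod.val_mul, tOmega_pow_mod, mul_comm]
    simp_rw [h1]
    have himg : (Finset.univ : Finset (ZMod s)) = (Finset.range s).image (Nat.cast) := by
      ext x
      simp only [Finset.mem_univ, Finset.mem_image, Finset.mem_range, true_iff]
      exact ⟨x.val, ZMod.val_lt x, ZMod.natCast_rightInverse x⟩
    rw [himg, Finset.sum_image (fun a ha b hb h => by
      rw [Finset.mem_coe, Finset.mem_range] at ha hb
      rw [← ZMod.val_cast_of_lt ha, ← ZMod.val_cast_of_lt hb, h])]
    rw [Finset.sum_congr rfl (fun i hi => by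
      rw [ZMod.val_cast_of_lt (Finset.mem_range.mp hi)])]
    rw [geom_sum_eq (psi_ne_one_of_prim hd), psi_pow_s, sub_self, zero_div]


lemma fhat_eq_psi {n m : ℕ} (A : Tensor3 n m s) (k : ZMod s) :
    fhat A k = ∑ j : ZMod s, psi (k * j) • (A j).map (fun x => (x : ℂ)) := by
  simp_rw [fhat, psi_hmul]

lemma fhat_apply {n m : ℕ} (A : Tensor3 n m s) (k : ZMod s)
    (i : Fin n) (j : Fin m) :
    fhat A k i j = ∑ a : ZMod s, psi (k * a) * (A a i j : ℂ) := by
  simp [fhat_eq_psi, Matrix.sum_apply, Matrix.smul_apply, Matrix.map_apply, smul_eq_mul]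

lemma fhat_sub {n m : ℕ} (X Y : Tensor3 n m s) (k : ZMod s) :
    fhat (X - Y) k = fhat X k - fhat Y k := by
  ext i j
  simp [fhat_apply, Matrix.sub_apply, mul_sub, Finset.sum_sub_distrib]

lemma fhat_tProd {n m h : ℕ} (A : Tensor3 n m s)
    (B : Tensor3 m h s) (k : ZMod s) :
    fhat (tProd A B) k = fhat A k * fhat B k := by
  show fhat (fun k => ∑ j : ZMod s, A (k - j) * B j) k = _
  rw [fhat_eq_psi, fhat_eq_psi, fhat_eq_psi, Matrix.sum_mul]
  simp_rw [Matrix.mul_sum]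
  have hmap : ∀ j : ZMod s, ((∑ i : ZMod s, A (j - i) * B i).map (fun x => (x : ℂ)))
      = ∑ i : ZMod s, (A (j - i)).map (fun x => (x : ℂ)) * (B i).map (fun x => (x : ℂ)) := by
    intro j; ext p q
    simp [Matrix.map_apply, Matrix.sum_apply, Matrix.mul_apply, Finset.mul_sum]
  simp_rw [hmap, Finset.smul_sum]
  conv_lhs => rw [Finset.sum_comm]
  conv_rhs => rw [Finset.sum_comm]
  refine Finset.sum_congr rfl fun i _ => ?_
  rw [Fintype.sum_equiv (Equiv.addRight i)
    (fun a => (psi (k * a) • (A a).map (fun x => (x : ℂ))) * (psi (k * i) • (B i).map (fun x => (x : ℂ))))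
    (fun j => psi (k * j) • ((A (j - i)).map (fun x => (x : ℂ)) * (B i).map (fun x => (x : ℂ))))
    (fun a => ?_)]
  simp only [Equiv.coe_addRight, add_sub_cancel_right]
  rw [Matrix.smul_mul, Matrix.mul_smul, smul_smul, ← psi_add, ← mul_add]

lemma star_psi (x : ZMod s) : star (psi x) = psi (-x) := conj_psi x

lemma fhat_tTrans {n m : ℕ} (A : Tensor3 n m s) (k : ZMod s) :
    fhat (tTrans A) k = (fhat A k)ᴴ := by
  show fhat (fun j => (A (-j))ᵀ) k = _
  rw [fhat_eq_psi, fhat_eq_psi, Matrix.conjTranspose_sum]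
  rw [Fintype.sum_equiv (Equiv.neg (ZMod s))
    (fun j => (psi (k * j) • (A j).map (fun x => (x : ℂ)))ᴴ)
    (fun j => psi (k * j) • ((A (-j))ᵀ).map (fun x => (x : ℂ)))
    (fun j => ?_)]
  simp only [Equiv.neg_apply, neg_neg]
  rw [Matrix.conjTranspose_smul, star_psi, ← mul_neg]
  congr 1
  ext p q
  simp [Matrix.conjTranspose_apply, Matrix.map_apply, Matrix.transpose_apply, Complex.conj_ofReal]

lemma inv_sum (v : ZMod s → ℂ) (l : ZMod s) :
    ∑ k : ZMod s, psi (k * (-l)) * (∑ a : ZMod s, psi (k * a) * v a) = (s : ℂ) * v l := by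
  simp_rw [Finset.mul_sum]
  rw [Finset.sum_comm]
  have key : ∀ a : ZMod s, ∑ k : ZMod s, psi (k * -l) * (psi (k * a) * v a)
      = (if a - l = 0 then (s : ℂ) else 0) * v a := by
    intro a
    rw [← sum_psi (a - l), Finset.sum_mul]
    refine Finset.sum_congr rfl fun k _ => ?_
    rw [← mul_assoc, ← psi_add, show k * -l + k * a = k * (a - l) by ring]
  simp_rw [key]
  have : ∀ a : ZMod s, (if a - l = 0 then (s : ℂ) else 0) * v a
      = if a = l then (s : ℂ) * v a else 0 := by
    intro a
    by_cases h : a = l <;> simp [h, sub_eq_zero]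
  simp_rw [this]
  simp [Finset.sum_ite_eq']

lemma fhat_inj {n m : ℕ} (X Y : Tensor3 n m s)
    (h : ∀ k : ZMod s, fhat X k = fhat Y k) : X = Y := by
  funext l
  ext i j
  have h1 := inv_sum (fun a => (X a i j : ℂ)) l
  have h2 := inv_sum (fun a => (Y a i j : ℂ)) l
  have hs : ((s : ℂ)) * ((X l i j : ℂ)) = (s : ℂ) * ((Y l i j : ℂ)) := by
    rw [← h1, ← h2]
    refine Finset.sum_congr rfl fun k _ => ?_
    rw [← fhat_apply, ← fhat_apply, h k]
  have hsne : ((s : ℂ)) ≠ 0 := Nat.cast_ne_zero.mpr (NeZero.ne s)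
  exact_mod_cast mul_left_cancel₀ hsne hs

end Aux

/-- The T-Lyapunov equation decouples in the Fourier domain into `s` matrix Lyapunov
equations for the Fourier-domain diagonal blocks. -/
theorem tLyapunov_iff_fourier_blocks {n m s : ℕ} [NeZero s]
    (A : Tensor3 n n s) (B : Tensor3 n m s) (W : Tensor3 n n s) :
    W - tProd (tProd A W) (tTrans A) = tProd B (tTrans B) ↔
      ∀ k : ZMod s,
        fhat W k - fhat A k * fhat W k * (fhat A k)ᴴ = fhat B k * (fhat B k)ᴴ := by
  constructor
  · intro h k
    have hk : fhat (W - tProd (tProd A W) (tTrans A)) k = fhat (tProd B (tTrans B)) k := by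
      rw [h]
    rwa [fhat_sub, fhat_tProd, fhat_tProd, fhat_tTrans, fhat_tProd, fhat_tTrans] at hk
  · intro h
    refine fhat_inj _ _ fun k => ?_
    rw [fhat_sub, fhat_tProd, fhat_tProd, fhat_tTrans, fhat_tProd, fhat_tTrans]
    exact h k
end
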